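/- Exact padding threshold: let s ∈ ℝ^d with p = 1.5-entmax(s) satisfying p_i > 0 for all i, and let s' ∈ ℝ^{d+1} agree with s on the first d coordinates. Define τ_d = M − sqrt((1−S)/d) where M and S are the mean and unnormalized variance of the coordinates s_i/2 (this is well-defined since S ≤ 1 under full support). Then 1.5-entmax(s') restricted to the first d coordinates equals p and the (d+1)-st probability is 0 if and only if s'_{d+1} ≤ 2τ_d. -/
import Mathlib

open Finset

lemma entmax_term_mono {a t u : ℝ} (h : t ≤ u) :
    (max (a - u) 0) ^ 2 ≤ (max (a - t) 0) ^ 2 := by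
  have h1 : max (a - u) 0 ≤ max (a - t) 0 := max_le_max (by linarith) le_rfl
  have h2 : (0:ℝ) ≤ max (a - u) 0 := le_max_right _ _
  nlinarith

lemma entmax_sum_strict {n : ℕ} (a : Fin n → ℝ) (t u : ℝ) (j : Fin n)
    (htu : t < u) (hj : t < a j) :
    ∑ i, (max (a i - u) 0) ^ 2 < ∑ i, (max (a i - t) 0) ^ 2 := by
  apply Finset.sum_lt_sum (fun i _ => entmax_term_mono htu.le) ⟨j, Finset.mem_univ j, ?_⟩
  rcases le_or_gt (a j) u with h | h
  · rw [max_eq_right (by linarith : a j - u ≤ 0), max_eq_left (by linarith : (0:ℝ) ≤ a j - t)]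
    nlinarith
  · rw [max_eq_left (by linarith : (0:ℝ) ≤ a j - u), max_eq_left (by linarith : (0:ℝ) ≤ a j - t)]
    nlinarith

lemma entmax_exists_active {n : ℕ} (a : Fin n → ℝ) (u : ℝ)
    (h : ∑ i, (max (a i - u) 0) ^ 2 = 1) : ∃ k, u < a k := by
  by_contra hc
  push_neg at hc
  have h0 : ∑ i, (max (a i - u) 0) ^ 2 = 0 := by
    apply Finset.sum_eq_zero; intro i _
    rw [max_eq_right (by linarith [hc i] : a i - u ≤ 0)]; ring
  linarith

lemma entmax_tau_unique {n : ℕ} (a : Fin n → ℝ) (t u : ℝ)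
    (ht : ∑ i, (max (a i - t) 0) ^ 2 = 1)
    (hu : ∑ i, (max (a i - u) 0) ^ 2 = 1) : t = u := by
  rcases lt_trichotomy t u with h | h | h
  · obtain ⟨j, hj⟩ := entmax_exists_active a t ht
    have := entmax_sum_strict a t u j h hj; linarith
  · exact h
  · obtain ⟨j, hj⟩ := entmax_exists_active a u hu
    have := entmax_sum_strict a u t j h hj; linarith

theorem entmax_padding_iff (d : ℕ) (hd : 0 < d) (s : Fin d → ℝ)
    (s' : Fin (d + 1) → ℝ) (hext : ∀ i : Fin d, s' i.castSucc = s i)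
    (τ τ' : ℝ)
    (hτ : ∑ i, (max (s i / 2 - τ) 0) ^ 2 = 1)
    (hactive : ∀ i, s i / 2 > τ)
    (hτ' : ∑ i, (max (s' i / 2 - τ') 0) ^ 2 = 1) :
    ((∀ i : Fin d,
        (max (s' i.castSucc / 2 - τ') 0) ^ 2 = (max (s i / 2 - τ) 0) ^ 2) ∧
      (max (s' (Fin.last d) / 2 - τ') 0) ^ 2 = 0) ↔
      s' (Fin.last d) ≤
        2 * ((∑ i, s i / 2) / d -
          Real.sqrt ((1 - ∑ i, (s i / 2 - (∑ j, s j / 2) / d) ^ 2) / d)) := by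
  have hd0 : (d:ℝ) ≠ 0 := Nat.cast_ne_zero.mpr hd.ne'
  have hdpos : (0:ℝ) < d := Nat.cast_pos.mpr hd
  set M : ℝ := (∑ i, s i / 2) / d with hM
  have hsum : ∑ i, s i / 2 = (d:ℝ) * M := by rw [hM]; field_simp
  -- τ satisfies ∑ (s i/2 - τ)^2 = 1
  have hτ2 : ∑ i, (s i / 2 - τ) ^ 2 = 1 := by
    rw [← hτ]
    apply Finset.sum_congr rfl
    intro i _
    rw [max_eq_left (by linarith [hactive i])]
  have hτM : τ < M := by
    have h1 : ∑ i, τ < ∑ i, s i / 2 :=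
      Finset.sum_lt_sum_of_nonempty (Finset.univ_nonempty_iff.mpr ⟨⟨0, hd⟩⟩)
        (fun i _ => hactive i)
    rw [Finset.sum_const, Finset.card_univ, Fintype.card_fin, nsmul_eq_mul] at h1
    rw [hM]
    rw [lt_div_iff₀ hdpos]
    linarith
  -- the key algebraic identity
  have key : ∑ i, (s i / 2 - τ) ^ 2 - ∑ i, (s i / 2 - M) ^ 2 = (d:ℝ) * (M - τ) ^ 2 := by
    have h1 : ∑ i, (s i / 2 - τ) ^ 2 - ∑ i, (s i / 2 - M) ^ 2
        = ∑ i, (2 * (M - τ) * (s i / 2) - (M - τ) * (τ + M)) := by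
      rw [← Finset.sum_sub_distrib]
      apply Finset.sum_congr rfl
      intro i _; ring
    rw [h1, Finset.sum_sub_distrib, ← Finset.mul_sum, hsum, Finset.sum_const,
      Finset.card_univ, Fintype.card_fin, nsmul_eq_mul]
    ring
  have hvar : (1 - ∑ i, (s i / 2 - M) ^ 2) / d = (M - τ) ^ 2 := by
    have h' : 1 - ∑ i, (s i / 2 - M) ^ 2 = (d:ℝ) * (M - τ) ^ 2 := by linarith
    rw [h', mul_div_cancel_left₀ _ hd0]
  have hsqrt : Real.sqrt ((1 - ∑ i, (s i / 2 - M) ^ 2) / d) = M - τ := by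
    rw [hvar, Real.sqrt_sq (by linarith)]
  rw [hsqrt]
  have hRHS : 2 * (M - (M - τ)) = 2 * τ := by ring
  rw [hRHS]
  constructor
  · rintro ⟨h1, h2⟩
    -- show τ' = τ using coordinate 0
    have i0 : Fin d := ⟨0, hd⟩
    have hi := h1 i0
    rw [hext i0] at hi
    rw [show max (s i0 / 2 - τ) 0 = s i0 / 2 - τ from
      max_eq_left (by linarith [hactive i0])] at hi
    have hB : 0 < s i0 / 2 - τ := by linarith [hactive i0]
    have hA0 : (0:ℝ) ≤ max (s i0 / 2 - τ') 0 := le_max_right _ _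
    have hAB : max (s i0 / 2 - τ') 0 = s i0 / 2 - τ := by
      have hle1 : max (s i0 / 2 - τ') 0 ≤ s i0 / 2 - τ := by nlinarith
      have hle2 : s i0 / 2 - τ ≤ max (s i0 / 2 - τ') 0 := by nlinarith
      linarith
    have hττ' : τ' = τ := by
      have ha : (0:ℝ) ≤ s i0 / 2 - τ' := by
        by_contra hc
        push_neg at hc
        rw [max_eq_right hc.le] at hAB
        linarith
      rw [max_eq_left ha] at hAB
      linarith
    rw [hττ'] at h2
    have : max (s' (Fin.last d) / 2 - τ) 0 = 0 := by
      have := sq_eq_zero_iff.mp h2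
      exact this
    have hle : s' (Fin.last d) / 2 - τ ≤ 0 := by
      by_contra hc
      push_neg at hc
      rw [max_eq_left hc.le] at this
      linarith
    linarith
  · intro hle
    have hlast : max (s' (Fin.last d) / 2 - τ) 0 = 0 :=
      max_eq_right (by linarith)
    have hsum' : ∑ i, (max (s' i / 2 - τ) 0) ^ 2 = 1 := by
      rw [Fin.sum_univ_castSucc]
      have hcast : ∀ i : Fin d,
          (max (s' i.castSucc / 2 - τ) 0) ^ 2 = (max (s i / 2 - τ) 0) ^ 2 := by
        intro i; rw [hext i]
      rw [Finset.sum_congr rfl (fun i _ => hcast i), hτ, hlast]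
      ring
    have hττ' : τ' = τ := entmax_tau_unique (fun i => s' i / 2) τ' τ hτ' hsum'
    rw [hττ']
    refine ⟨fun i => by rw [hext i], ?_⟩
    rw [hlast]; ring
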